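/- Let c > c₀ > 0, set cot α = √((c/c₀)² - 1) with sin α = c₀/c. If φ : ℝ^n → ℝ is a C² concave function solving -Δφ = (c₀ sin α / 2)(cot²α - |Dφ|²) and satisfying |Dφ(x)| ≤ cot α for all x, then φ is a (classical) subsolution of the forced mean curvature equation: -div( Dφ/√(1+|Dφ|²) ) + c₀ - c/√(1+|Dφ|²) ≤ 0 on ℝ^n. -/

import Mathlib

open scoped RealInnerProductSpace
open scoped Topology

lemma antitone_hasDerivAt_nonpos {g : ℝ → ℝ} {a t : ℝ} (hg : Antitone g)
    (h : HasDerivAt g a t) : a ≤ 0 := by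
  have h1 : Filter.Tendsto (slope g t) (𝓝[>] t) (𝓝 a) :=
    (hasDerivAt_iff_tendsto_slope.mp h).mono_left
      (nhdsWithin_mono t (fun y hy => ne_of_gt hy))
  refine le_of_tendsto h1 ?_
  filter_upwards [self_mem_nhdsWithin] with y hy
  rw [slope_def_field]
  have h2 : g y ≤ g t := hg (le_of_lt hy)
  exact div_nonpos_of_nonpos_of_nonneg (by linarith) (by simp at hy ⊢; linarith)

lemma second_dir_deriv_nonpos {E : Type*} [NormedAddCommGroup E] [NormedSpace ℝ E]
    (φ : E → ℝ) (hφ : ContDiff ℝ 2 φ) (hconc : ConcaveOn ℝ Set.univ φ)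
    (x v : E) : fderiv ℝ (fderiv ℝ φ) x v v ≤ 0 := by
  have hφ1 : Differentiable ℝ φ := hφ.differentiable (by norm_num)
  have hφ2 : Differentiable ℝ (fderiv ℝ φ) :=
    (hφ.fderiv_right (m := 1) (by norm_num)).differentiable (by norm_num)
  set A := fderiv ℝ (fderiv ℝ φ) x with hA
  -- the curve
  have hcurve : ∀ t : ℝ, HasDerivAt (fun t : ℝ => x + t • v) v t := by
    intro t
    simpa using (((hasDerivAt_id t).smul_const v).const_add x)
  -- first derivative of f(t) = φ(x + t v)
  have hf' : ∀ t : ℝ, HasDerivAt (fun t : ℝ => φ (x + t • v))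
      (fderiv ℝ φ (x + t • v) v) t := by
    intro t
    exact (hφ1 (x + t • v)).hasFDerivAt.comp_hasDerivAt t (hcurve t)
  -- second derivative at 0
  have hB : HasFDerivAt (fun y => fderiv ℝ φ y v)
      ((ContinuousLinearMap.apply ℝ ℝ v).comp A) x :=
    (ContinuousLinearMap.apply ℝ ℝ v).hasFDerivAt.comp x (hφ2 x).hasFDerivAt
  have hf'' : HasDerivAt (fun t : ℝ => fderiv ℝ φ (x + t • v) v) (A v v) 0 := by
    have hB' : HasFDerivAt (fun y => fderiv ℝ φ y v)
        (((ContinuousLinearMap.apply ℝ ℝ v).comp A)) (x + (0 : ℝ) • v) := by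
      simpa using hB
    simpa [Function.comp_def] using hB'.comp_hasDerivAt (0 : ℝ) (hcurve 0)
  -- concavity of f
  have hconcf : ConcaveOn ℝ Set.univ (fun t : ℝ => φ (x + t • v)) := by
    have haff : ConcaveOn ℝ ((AffineMap.lineMap x (x + v) : ℝ →ᵃ[ℝ] E) ⁻¹' Set.univ)
        (φ ∘ (AffineMap.lineMap x (x + v) : ℝ →ᵃ[ℝ] E)) :=
      hconc.comp_affineMap _
    have : (φ ∘ (AffineMap.lineMap x (x + v) : ℝ →ᵃ[ℝ] E)) = fun t : ℝ => φ (x + t • v) := by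
      funext t
      simp [AffineMap.lineMap_apply, add_comm]
    rwa [this, Set.preimage_univ] at haff
  -- deriv is antitone
  have hderiv : deriv (fun t : ℝ => φ (x + t • v)) = fun t => fderiv ℝ φ (x + t • v) v :=
    funext fun t => (hf' t).deriv
  have hant : Antitone (fun t : ℝ => fderiv ℝ φ (x + t • v) v) := by
    rw [← hderiv]
    refine antitoneOn_univ.mp (hconcf.antitoneOn_deriv ?_)
    intro t _
    exact (hf' t).differentiableAt
  exact antitone_hasDerivAt_nonpos hant hf''

set_option maxHeartbeats 1000000 in
/-- If `φ` is a `C²` concave solution of `-Δφ = (c₀ sin α / 2)(cot²α - |Dφ|²)` with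
`|Dφ| ≤ cot α` (where `sin α = c₀/c`, `cot α = √((c/c₀)² - 1)`), then `φ` is a classical
subsolution of the forced mean curvature equation
`-div(Dφ/√(1+|Dφ|²)) + c₀ - c/√(1+|Dφ|²) ≤ 0`, the divergence being expanded as
`Δφ/√(1+|Dφ|²) - D²φ(Dφ,Dφ)/(1+|Dφ|²)^{3/2}`. -/
theorem stmt_7 {n : ℕ} (hn : 1 ≤ n) (c c₀ cot : ℝ) (hc₀ : 0 < c₀) (hc : c₀ < c)
    (hcot : cot = Real.sqrt ((c / c₀) ^ 2 - 1))
    (φ : EuclideanSpace ℝ (Fin n) → ℝ)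
    (hφ : ContDiff ℝ 2 φ)
    (hconc : ConcaveOn ℝ Set.univ φ)
    (hpde : ∀ x, -(∑ i : Fin n,
        fderiv ℝ (fun y => fderiv ℝ φ y (EuclideanSpace.single i (1 : ℝ))) x
          (EuclideanSpace.single i (1 : ℝ)))
      = (c₀ * (c₀ / c) / 2) * (cot ^ 2 - ‖gradient φ x‖ ^ 2))
    (hgrad : ∀ x, ‖gradient φ x‖ ≤ cot) :
    ∀ x, -((∑ i : Fin n,
        fderiv ℝ (fun y => fderiv ℝ φ y (EuclideanSpace.single i (1 : ℝ))) x
          (EuclideanSpace.single i (1 : ℝ))) / Real.sqrt (1 + ‖gradient φ x‖ ^ 2)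
        - ⟪fderiv ℝ (gradient φ) x (gradient φ x), gradient φ x⟫
            / (1 + ‖gradient φ x‖ ^ 2) ^ ((3 : ℝ) / 2))
      + c₀ - c / Real.sqrt (1 + ‖gradient φ x‖ ^ 2) ≤ 0 := by
  intro x
  set v := gradient φ x with hv
  set g : ℝ := ‖v‖ with hg
  set s : ℝ := Real.sqrt (1 + g ^ 2) with hs
  have hφ2 : Differentiable ℝ (fderiv ℝ φ) :=
    (hφ.fderiv_right (m := 1) (by norm_num)).differentiable (by norm_num)
  set A := fderiv ℝ (fderiv ℝ φ) x with hA
  -- identify the Hessian term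
  have hgradfun : (gradient φ) = fun y =>
      (InnerProductSpace.toDual ℝ (EuclideanSpace ℝ (Fin n))).symm (fderiv ℝ φ y) := rfl
  set e : (EuclideanSpace ℝ (Fin n) →L[ℝ] ℝ) ≃L[ℝ] EuclideanSpace ℝ (Fin n) :=
    (InnerProductSpace.toDual ℝ (EuclideanSpace ℝ (Fin n))).symm.toContinuousLinearEquiv with he0
  have he : ∀ w, e w = (InnerProductSpace.toDual ℝ (EuclideanSpace ℝ (Fin n))).symm w := by
    intro w; rw [he0]; simp
  have hfg : HasFDerivAt (gradient φ) (e.toContinuousLinearMap.comp A) x := by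
    rw [hgradfun]
    have : (fun y => (InnerProductSpace.toDual ℝ (EuclideanSpace ℝ (Fin n))).symm (fderiv ℝ φ y))
        = fun y => e (fderiv ℝ φ y) := by
      funext y; rw [he]
    rw [this]
    exact (e.toContinuousLinearMap.hasFDerivAt).comp x (hφ2 x).hasFDerivAt
  have hQ : ⟪fderiv ℝ (gradient φ) x v, v⟫ = A v v := by
    rw [hfg.fderiv]
    simp only [ContinuousLinearMap.comp_apply, ContinuousLinearEquiv.coe_coe]
    rw [he, InnerProductSpace.toDual_symm_apply]
  have hQle : ⟪fderiv ℝ (gradient φ) x v, v⟫ ≤ 0 := by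
    rw [hQ]; exact second_dir_deriv_nonpos φ hφ hconc x v
  -- basic facts about s
  have hg2 : (0:ℝ) < 1 + g ^ 2 := by positivity
  have hs0 : 0 < s := Real.sqrt_pos.mpr hg2
  have hs2 : s ^ 2 = 1 + g ^ 2 := Real.sq_sqrt hg2.le
  have hpw : (0:ℝ) < (1 + g ^ 2) ^ ((3:ℝ)/2) := Real.rpow_pos_of_pos hg2 _
  -- cot squared
  have hc0 : (0:ℝ) < c := hc₀.trans hc
  have hcc : (1:ℝ) < c / c₀ := (one_lt_div hc₀).mpr hc
  have hcot2 : cot ^ 2 = (c / c₀) ^ 2 - 1 := by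
    rw [hcot, Real.sq_sqrt]; nlinarith
  -- PDE gives the sum
  have hsum := hpde x
  set S : ℝ := ∑ i : Fin n,
      fderiv ℝ (fun y => fderiv ℝ φ y (EuclideanSpace.single i (1 : ℝ))) x
        (EuclideanSpace.single i (1 : ℝ)) with hS
  have hSval : S = -((c₀ * (c₀ / c) / 2) * (cot ^ 2 - g ^ 2)) := by linarith
  set P : ℝ := (c₀ * (c₀ / c) / 2) * (cot ^ 2 - g ^ 2) with hP
  have key : P + c₀ * s - c ≤ 0 := by
    have hPval : P * (2 * c) = c ^ 2 - c₀ ^ 2 * s ^ 2 := by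
      rw [hP, hcot2, hs2]; field_simp; ring
    nlinarith [sq_nonneg (c₀ * s - c), mul_pos hc0 hc0, hc0, hs0]
  have hfrac : P / s + c₀ - c / s ≤ 0 := by
    have : P / s + c₀ - c / s = (P + c₀ * s - c) / s := by field_simp
    rw [this]
    exact div_nonpos_of_nonpos_of_nonneg key hs0.le
  have hQdiv : ⟪fderiv ℝ (gradient φ) x v, v⟫ / (1 + g ^ 2) ^ ((3:ℝ)/2) ≤ 0 :=
    div_nonpos_of_nonpos_of_nonneg hQle hpw.le
  have : -(S / s - ⟪fderiv ℝ (gradient φ) x v, v⟫ / (1 + g ^ 2) ^ ((3:ℝ)/2)) + c₀ - c / s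
      = P / s + ⟪fderiv ℝ (gradient φ) x v, v⟫ / (1 + g ^ 2) ^ ((3:ℝ)/2) + c₀ - c / s := by
    rw [hSval]; ring
  rw [this]
  linarith
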